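/- Let W̃ be an extended affine Weyl group with automorphism δ and let w ∈ W̃ be δ-straight, i.e., ℓ(w δ(w) ⋯ δ^{n-1}(w)) = n ℓ(w) for all n ∈ ℕ. Then every element of W̃ obtained from w by a length-preserving δ-twisted conjugation by a simple reflection s (i.e., w' = s w δ(s) with ℓ(w') = ℓ(w)) is again δ-straight. -/

import Mathlib

open scoped Classical

variable (X : Type*) [AddCommGroup X] (W₀ : Type*) [Group W₀] [DistribMulAction W₀ X]

/-- Multiplication in the extended affine Weyl group `W̃ = X ⋊ W₀`, whose elements are
pairs `(λ, u)` representing `t^λ u`. -/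
def eawMul (a b : X × W₀) : X × W₀ := (a.1 + a.2 • b.1, a.2 * b.2)

/-- The finite root `w⁻¹(α)`, i.e. `α` composed with the action of `u`. -/
def rootComp (u : W₀) (α : X →+ ℤ) : X →+ ℤ :=
  α.comp (DistribMulAction.toAddMonoidHom X u)

/-- The Iwahori–Matsumoto length of `t^λ u ∈ W̃`. -/
noncomputable def lenIM (Rplus : Finset (X →+ ℤ)) (w : X × W₀) : ℤ :=
  ∑ α ∈ Rplus, if rootComp X W₀ w.2 α ∈ Rplus then |α w.1| else |α w.1 - 1|

/-- The twisted power `(wδ)^n = w δ(w) ⋯ δ^{n-1}(w)` (as an element of `W̃`). -/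
def twistedPow (δ : X × W₀ → X × W₀) (w : X × W₀) : ℕ → X × W₀
  | 0 => (0, 1)
  | n + 1 => eawMul X W₀ w (δ (twistedPow δ w n))

/-- `w` is `δ`-straight: `ℓ(w δ(w) ⋯ δ^{n-1}(w)) = n ℓ(w)` for all `n`. -/
def IsStraight (Rplus : Finset (X →+ ℤ)) (δ : X × W₀ → X × W₀) (w : X × W₀) : Prop :=
  ∀ n : ℕ, lenIM X W₀ Rplus (twistedPow X W₀ δ w n) = n * lenIM X W₀ Rplus w

/-! ### Auxiliary lemmas -/

lemma eaw_assoc (a b c : X × W₀) :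
    eawMul X W₀ (eawMul X W₀ a b) c = eawMul X W₀ a (eawMul X W₀ b c) := by
  simp [eawMul, mul_smul, smul_add, add_assoc, mul_assoc]

lemma eaw_one_mul (a : X × W₀) : eawMul X W₀ ((0 : X), (1 : W₀)) a = a := by simp [eawMul]

lemma eaw_mul_one (a : X × W₀) : eawMul X W₀ a ((0 : X), (1 : W₀)) = a := by simp [eawMul]

lemma eaw_invol_cancel_left {a : X × W₀} (ha : eawMul X W₀ a a = ((0 : X), (1 : W₀)))
    (z : X × W₀) : eawMul X W₀ a (eawMul X W₀ a z) = z := by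
  rw [← eaw_assoc, ha, eaw_one_mul]

lemma eaw_invol_cancel_right {a : X × W₀} (ha : eawMul X W₀ a a = ((0 : X), (1 : W₀)))
    (z : X × W₀) : eawMul X W₀ (eawMul X W₀ z a) a = z := by
  rw [eaw_assoc, ha, eaw_mul_one]

lemma rootComp_apply (u : W₀) (α : X →+ ℤ) (x : X) :
    rootComp X W₀ u α x = α (u • x) := rfl

lemma rootComp_rootComp (u v : W₀) (α : X →+ ℤ) :
    rootComp X W₀ v (rootComp X W₀ u α) = rootComp X W₀ (u * v) α := by
  ext x; simp [rootComp_apply, mul_smul]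

lemma rootComp_neg (u : W₀) (α : X →+ ℤ) :
    rootComp X W₀ u (-α) = -(rootComp X W₀ u α) := by
  ext x; simp [rootComp_apply]

lemma rootComp_inj (u : W₀) {α β : X →+ ℤ}
    (h : rootComp X W₀ u α = rootComp X W₀ u β) : α = β := by
  have := congrArg (rootComp X W₀ u⁻¹) h
  rwa [rootComp_rootComp, rootComp_rootComp, mul_inv_cancel,
    show rootComp X W₀ 1 α = α from by ext x; simp [rootComp_apply],
    show rootComp X W₀ 1 β = β from by ext x; simp [rootComp_apply]] at this

/-- A single summand of the Iwahori–Matsumoto length. -/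
noncomputable def termIM (Rplus : Finset (X →+ ℤ)) (y : X × W₀) (α : X →+ ℤ) : ℤ :=
  if rootComp X W₀ y.2 α ∈ Rplus then |α y.1| else |α y.1 - 1|

lemma lenIM_eq_sum (Rplus : Finset (X →+ ℤ)) (y : X × W₀) :
    lenIM X W₀ Rplus y = ∑ α ∈ Rplus, termIM X W₀ Rplus y α := rfl

lemma termIM_nonneg (Rplus : Finset (X →+ ℤ)) (y : X × W₀) (α : X →+ ℤ) :
    0 ≤ termIM X W₀ Rplus y α := by
  unfold termIM; split <;> exact abs_nonneg _

/-- The triangle inequality for the Iwahori–Matsumoto length. -/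
lemma lenIM_triangle (Rplus : Finset (X →+ ℤ))
    (hdisj : ∀ α ∈ Rplus, -α ∉ Rplus)
    (hstab : ∀ u : W₀, ∀ α ∈ Rplus,
      rootComp X W₀ u α ∈ Rplus ∨ -(rootComp X W₀ u α) ∈ Rplus)
    (x y : X × W₀) :
    lenIM X W₀ Rplus (eawMul X W₀ x y) ≤ lenIM X W₀ Rplus x + lenIM X W₀ Rplus y := by
  set σ : (X →+ ℤ) → (X →+ ℤ) := fun α =>
    if rootComp X W₀ x.2 α ∈ Rplus then rootComp X W₀ x.2 α else -(rootComp X W₀ x.2 α)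
    with hσ
  have hσmem : ∀ α ∈ Rplus, σ α ∈ Rplus := by
    intro α hα
    by_cases h : rootComp X W₀ x.2 α ∈ Rplus
    · simp [hσ, h]
    · rcases hstab x.2 α hα with h' | h'
      · exact absurd h' h
      · simp [hσ, h, h']
  have hterm : ∀ α ∈ Rplus, termIM X W₀ Rplus (eawMul X W₀ x y) α ≤
      termIM X W₀ Rplus x α + termIM X W₀ Rplus y (σ α) := by
    intro α hα
    have happ : α (eawMul X W₀ x y).1 = α x.1 + rootComp X W₀ x.2 α y.1 := by
      simp [eawMul, rootComp_apply, map_add]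
    have hcond : rootComp X W₀ (eawMul X W₀ x y).2 α
        = rootComp X W₀ y.2 (rootComp X W₀ x.2 α) := by
      rw [rootComp_rootComp]; rfl
    set a := α x.1
    set β := rootComp X W₀ x.2 α with hβdef
    set b := β y.1
    by_cases hβ : β ∈ Rplus
    · have hσα : σ α = β := by simp [hσ, ← hβdef, hβ]
      by_cases hγ : rootComp X W₀ y.2 β ∈ Rplus
      · simp only [termIM, hcond, hγ, if_pos, hβ, hσα, happ, ← hβdef, if_pos hβ]
        exact abs_add_le a b
      · simp only [termIM, hcond, hγ, if_neg, if_pos hβ, hσα, happ, if_neg hγ, ← hβdef, if_false]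
        calc |a + b - 1| = |a + (b - 1)| := by ring_nf
          _ ≤ |a| + |b - 1| := abs_add_le _ _
    · have hσα : σ α = -β := by simp [hσ, ← hβdef, hβ]
      have hb' : (-β) y.1 = -b := by simp; rfl
      have hcondneg : rootComp X W₀ y.2 (-β) = -(rootComp X W₀ y.2 β) := rootComp_neg ..
      by_cases hγ : rootComp X W₀ y.2 β ∈ Rplus
      · have hng : -(rootComp X W₀ y.2 β) ∉ Rplus := hdisj _ hγ
        simp only [termIM, hcond, if_pos hγ, if_neg hβ, hσα, hcondneg, if_neg hng, happ, hb', ← hβdef]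
        calc |a + b| = |(a - 1) + (b + 1)| := by ring_nf
          _ ≤ |a - 1| + |b + 1| := abs_add_le _ _
          _ = |a - 1| + |-b - 1| := by rw [← abs_neg (-b - 1)]; ring_nf
      · have hng : -(rootComp X W₀ y.2 β) ∈ Rplus := by
          rcases hstab (x.2 * y.2) α hα with h' | h'
          · rw [← rootComp_rootComp, ← hβdef] at h'; exact absurd h' hγ
          · rw [← rootComp_rootComp, ← hβdef] at h'; exact h'
        simp only [termIM, hcond, if_neg hγ, if_neg hβ, hσα, hcondneg, if_pos hng, happ, hb',
          abs_neg, ← hβdef]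
        calc |a + b - 1| = |(a - 1) + b| := by ring_nf
          _ ≤ |a - 1| + |b| := abs_add_le _ _
  have hinj : ∀ α ∈ Rplus, ∀ α' ∈ Rplus, σ α = σ α' → α = α' := by
    intro α hα α' hα' h
    by_cases h1 : rootComp X W₀ x.2 α ∈ Rplus <;>
      by_cases h2 : rootComp X W₀ x.2 α' ∈ Rplus
    · simp only [hσ, if_pos h1, if_pos h2] at h
      exact rootComp_inj X W₀ x.2 h
    · simp only [hσ, if_pos h1, if_neg h2] at h
      rw [← rootComp_neg] at h
      have := rootComp_inj X W₀ x.2 h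
      exact absurd (this ▸ hα) (hdisj α' hα')
    · simp only [hσ, if_neg h1, if_pos h2] at h
      rw [← rootComp_neg] at h
      have := rootComp_inj X W₀ x.2 h
      exact absurd (this ▸ hα') (hdisj α hα)
    · simp only [hσ, if_neg h1, if_neg h2, neg_inj] at h
      exact rootComp_inj X W₀ x.2 h
  have h2 : ∑ α ∈ Rplus, termIM X W₀ Rplus y (σ α) ≤ lenIM X W₀ Rplus y := by
    rw [← Finset.sum_image hinj, lenIM_eq_sum]
    refine Finset.sum_le_sum_of_subset_of_nonneg ?_ (fun β _ _ => termIM_nonneg ..)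
    intro β hβ
    rcases Finset.mem_image.mp hβ with ⟨α, hα, rfl⟩
    exact hσmem α hα
  calc lenIM X W₀ Rplus (eawMul X W₀ x y)
      ≤ ∑ α ∈ Rplus, (termIM X W₀ Rplus x α + termIM X W₀ Rplus y (σ α)) :=
        Finset.sum_le_sum hterm
    _ = lenIM X W₀ Rplus x + ∑ α ∈ Rplus, termIM X W₀ Rplus y (σ α) := by
        rw [Finset.sum_add_distrib, lenIM_eq_sum]
    _ ≤ lenIM X W₀ Rplus x + lenIM X W₀ Rplus y := by linarith

section DeltaLemmas
variable (δ : X × W₀ → X × W₀)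
  (hδmul : ∀ a b, δ (eawMul X W₀ a b) = eawMul X W₀ (δ a) (δ b))

include hδmul in
lemma delta_one : δ ((0 : X), (1 : W₀)) = ((0 : X), (1 : W₀)) := by
  have h := hδmul ((0 : X), (1 : W₀)) ((0 : X), (1 : W₀))
  rw [eaw_mul_one] at h
  have h2 : (δ ((0 : X), (1 : W₀))).2 = 1 := by
    have := congrArg Prod.snd h
    simp [eawMul] at this
    exact this
  have h1 : (δ ((0 : X), (1 : W₀))).1 = 0 := by
    have := congrArg Prod.fst h
    simp [eawMul, h2] at this
    exact this
  exact Prod.ext h1 h2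

include hδmul in
lemma iterate_mul (k : ℕ) (a b : X × W₀) :
    δ^[k] (eawMul X W₀ a b) = eawMul X W₀ (δ^[k] a) (δ^[k] b) := by
  induction k generalizing a b with
  | zero => simp
  | succ k ih => simp only [Function.iterate_succ_apply, hδmul, ih]

include hδmul in
lemma tp_add (w : X × W₀) (m n : ℕ) :
    twistedPow X W₀ δ w (m + n) =
      eawMul X W₀ (twistedPow X W₀ δ w m) (δ^[m] (twistedPow X W₀ δ w n)) := by
  induction m with
  | zero => simp [twistedPow, eaw_one_mul]
  | succ m ih =>
      have : m + 1 + n = (m + n) + 1 := by omega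
      rw [this]
      show eawMul X W₀ w (δ (twistedPow X W₀ δ w (m + n))) = _
      rw [ih, hδmul, ← eaw_assoc, Function.iterate_succ_apply']
      rfl
end DeltaLemmas

/-- If `w` is a `δ`-straight element of the extended affine Weyl group
`W̃ = X ⋊ W₀` and `w' = s w δ(s)` is obtained from `w` by a length-preserving `δ`-twisted
conjugation by a simple reflection `s` (an involution of length `1`), then `w'` is again
`δ`-straight. -/
theorem straight_preserved_by_length_preserving_conj
    (Rplus : Finset (X →+ ℤ))
    (hdisj : ∀ α ∈ Rplus, -α ∉ Rplus)
    (hstab : ∀ u : W₀, ∀ α ∈ Rplus,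
      rootComp X W₀ u α ∈ Rplus ∨ -(rootComp X W₀ u α) ∈ Rplus)
    (δ : X × W₀ → X × W₀)
    (hδmul : ∀ a b, δ (eawMul X W₀ a b) = eawMul X W₀ (δ a) (δ b))
    (hδlen : ∀ a, lenIM X W₀ Rplus (δ a) = lenIM X W₀ Rplus a)
    (s w w' : X × W₀)
    (hs : eawMul X W₀ s s = ((0 : X), (1 : W₀)))
    (hslen : lenIM X W₀ Rplus s = 1)
    (hw' : w' = eawMul X W₀ (eawMul X W₀ s w) (δ s))
    (hlen : lenIM X W₀ Rplus w' = lenIM X W₀ Rplus w)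
    (hstraight : IsStraight X W₀ Rplus δ w) :
    IsStraight X W₀ Rplus δ w' := by
  set e : X × W₀ := ((0 : X), (1 : W₀)) with he
  -- iterated δ preserves length
  have hδlenIter : ∀ k : ℕ, ∀ a, lenIM X W₀ Rplus (δ^[k] a) = lenIM X W₀ Rplus a := by
    intro k
    induction k with
    | zero => intro a; rfl
    | succ k ih => intro a; rw [Function.iterate_succ_apply', hδlen, ih]
  -- iterates of s are involutions
  have hsIter : ∀ k : ℕ, eawMul X W₀ (δ^[k] s) (δ^[k] s) = e := by
    intro k
    have := congrArg (δ^[k]) hs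
    rw [iterate_mul X W₀ δ hδmul] at this
    rw [this]
    clear this
    induction k with
    | zero => rfl
    | succ k ih => rw [Function.iterate_succ_apply', ih, delta_one X W₀ δ hδmul]
  have hslenIter : ∀ k : ℕ, lenIM X W₀ Rplus (δ^[k] s) = 1 := fun k => by
    rw [hδlenIter k s, hslen]
  -- conjugation identity for twisted powers
  have hconj : ∀ n : ℕ, twistedPow X W₀ δ w' n =
      eawMul X W₀ s (eawMul X W₀ (twistedPow X W₀ δ w n) (δ^[n] s)) := by
    intro n
    induction n with
    | zero =>
        show e = eawMul X W₀ s (eawMul X W₀ e s)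
        rw [eaw_one_mul, hs]
    | succ n ih =>
        show eawMul X W₀ w' (δ (twistedPow X W₀ δ w' n)) = _
        rw [ih, hw', hδmul, hδmul, eaw_assoc, eaw_assoc,
          eaw_invol_cancel_left X W₀ (by
            have := congrArg δ hs
            rw [hδmul, delta_one X W₀ δ hδmul] at this
            exact this)]
        show _ = eawMul X W₀ s (eawMul X W₀ (eawMul X W₀ w (δ (twistedPow X W₀ δ w n)))
          (δ^[n + 1] s))
        rw [eaw_assoc, Function.iterate_succ_apply']
  set l := lenIM X W₀ Rplus w with hl
  -- upper bound: lenIM (twistedPow w' n) ≤ n * l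
  have hupper : ∀ n : ℕ, lenIM X W₀ Rplus (twistedPow X W₀ δ w' n) ≤ n * l := by
    intro n
    induction n with
    | zero =>
        have h0 := hstraight 0
        simp only [twistedPow, Nat.cast_zero, zero_mul] at h0 ⊢
        exact le_of_eq h0
    | succ n ih =>
        calc lenIM X W₀ Rplus (twistedPow X W₀ δ w' (n + 1))
            ≤ lenIM X W₀ Rplus w' + lenIM X W₀ Rplus (δ (twistedPow X W₀ δ w' n)) :=
              lenIM_triangle X W₀ Rplus hdisj hstab _ _
          _ = l + lenIM X W₀ Rplus (twistedPow X W₀ δ w' n) := by rw [hlen, hδlen]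
          _ ≤ l + n * l := by linarith
          _ = (n + 1 : ℕ) * l := by push_cast; ring
  -- subadditivity
  have hsub : ∀ m n : ℕ, lenIM X W₀ Rplus (twistedPow X W₀ δ w' (m + n)) ≤
      lenIM X W₀ Rplus (twistedPow X W₀ δ w' m) +
      lenIM X W₀ Rplus (twistedPow X W₀ δ w' n) := by
    intro m n
    rw [tp_add X W₀ δ hδmul w' m n]
    calc lenIM X W₀ Rplus (eawMul X W₀ (twistedPow X W₀ δ w' m)
          (δ^[m] (twistedPow X W₀ δ w' n)))
        ≤ lenIM X W₀ Rplus (twistedPow X W₀ δ w' m) +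
          lenIM X W₀ Rplus (δ^[m] (twistedPow X W₀ δ w' n)) :=
          lenIM_triangle X W₀ Rplus hdisj hstab _ _
      _ = _ := by rw [hδlenIter]
  -- lower bound: n * l ≤ lenIM (twistedPow w' n) + 2
  have hlower : ∀ n : ℕ, (n : ℤ) * l ≤ lenIM X W₀ Rplus (twistedPow X W₀ δ w' n) + 2 := by
    intro n
    have t1 : lenIM X W₀ Rplus (eawMul X W₀ s (eawMul X W₀ (twistedPow X W₀ δ w' n)
        (δ^[n] s))) ≤ 1 + (lenIM X W₀ Rplus (twistedPow X W₀ δ w' n) + 1) := by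
      calc lenIM X W₀ Rplus (eawMul X W₀ s (eawMul X W₀ (twistedPow X W₀ δ w' n) (δ^[n] s)))
          ≤ lenIM X W₀ Rplus s +
            lenIM X W₀ Rplus (eawMul X W₀ (twistedPow X W₀ δ w' n) (δ^[n] s)) :=
            lenIM_triangle X W₀ Rplus hdisj hstab _ _
        _ ≤ lenIM X W₀ Rplus s + (lenIM X W₀ Rplus (twistedPow X W₀ δ w' n) +
            lenIM X W₀ Rplus (δ^[n] s)) := by
            linarith [lenIM_triangle X W₀ Rplus hdisj hstab (twistedPow X W₀ δ w' n) (δ^[n] s)]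
        _ = 1 + (lenIM X W₀ Rplus (twistedPow X W₀ δ w' n) + 1) := by
            rw [hslen, hslenIter]
    -- recover tp w n from tp w' n : tp w n = s · (tp w' n · δ^[n] s)
    have hrec : twistedPow X W₀ δ w n =
        eawMul X W₀ s (eawMul X W₀ (twistedPow X W₀ δ w' n) (δ^[n] s)) := by
      rw [hconj n, eaw_assoc, eaw_invol_cancel_left X W₀ hs, eaw_invol_cancel_right X W₀ (hsIter n)]
    have hn' := hstraight n
    rw [hrec] at hn'
    linarith [t1, hn'.symm.le]
  -- conclude
  intro n
  rw [hlen]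
  refine le_antisymm (hupper n) ?_
  by_contra hcon
  push_neg at hcon
  have h1 : lenIM X W₀ Rplus (twistedPow X W₀ δ w' n) ≤ (n : ℤ) * l - 1 := by
    omega
  have h3 : lenIM X W₀ Rplus (twistedPow X W₀ δ w' (n + (n + n))) ≤
      3 * ((n : ℤ) * l - 1) := by
    calc lenIM X W₀ Rplus (twistedPow X W₀ δ w' (n + (n + n)))
        ≤ lenIM X W₀ Rplus (twistedPow X W₀ δ w' n) +
          lenIM X W₀ Rplus (twistedPow X W₀ δ w' (n + n)) := hsub n (n + n)
      _ ≤ lenIM X W₀ Rplus (twistedPow X W₀ δ w' n) +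
          (lenIM X W₀ Rplus (twistedPow X W₀ δ w' n) +
           lenIM X W₀ Rplus (twistedPow X W₀ δ w' n)) := by linarith [hsub n n]
      _ ≤ 3 * ((n : ℤ) * l - 1) := by linarith
  have h4 := hlower (n + (n + n))
  push_cast at h4
  linarith
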